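/- For every ε > 0 and a₁, a₂ > 0 there exists a constant C (depending on ε, a₁, a₂) such that for all η ∈ ℝ³: ∫_{ℝ³} |η - ζ|^{-(3-ε)} exp(-a₁|η - ζ|² - a₂(|η|² - |ζ|²)²/|η - ζ|²) dζ ≤ C(1 + |η|)^{-1}. -/

import Mathlib

set_option maxHeartbeats 1000000

open MeasureTheory Real Set
open scoped ENNReal RealInnerProductSpace

/-! Auxiliary lemmas for the Caflisch kernel decay estimate. -/

lemma rpow_le_exp_mul {ρ t : ℝ} (hρ : 0 ≤ ρ) (ht : 0 < t) {r : ℝ} (hr : 0 ≤ r) :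
    r ^ ρ ≤ Real.exp (ρ^2/(4*t)) * Real.exp (t * r^2) := by
  rcases le_or_gt r 1 with h | h
  · calc r ^ ρ ≤ 1 := Real.rpow_le_one hr h hρ
    _ ≤ _ := by
      rw [← Real.exp_add]
      exact Real.one_le_exp (by positivity)
  · rw [Real.rpow_def_of_pos (by linarith), ← Real.exp_add]
    apply Real.exp_le_exp.2
    have hlog : Real.log r ≤ r := (Real.log_le_sub_one_of_pos (by linarith)).trans (by linarith)
    have h1 : Real.log r * ρ ≤ r * ρ := mul_le_mul_of_nonneg_right hlog hρ
    have key : r * ρ - t * r^2 ≤ ρ^2/(4*t) := by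
      rw [le_div_iff₀ (by linarith : (0:ℝ) < 4*t)]
      nlinarith [sq_nonneg (ρ - 2*t*r)]
    linarith

lemma integrable_abs_rpow_mul_exp_neg_mul_sq {b : ℝ} (hb : 0 < b) {s : ℝ} (hs : -1 < s) :
    Integrable fun x : ℝ => |x| ^ s * Real.exp (-b * x ^ 2) := by
  have h0 : IntegrableOn (fun x : ℝ => |x| ^ s * Real.exp (-b * x ^ 2)) (Ioi 0) := by
    refine (integrableOn_rpow_mul_exp_neg_mul_sq hb hs).congr_fun (fun x hx => ?_)
      measurableSet_Ioi
    rw [abs_of_pos hx]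
  have h1 : IntegrableOn (fun x : ℝ => |x| ^ s * Real.exp (-b * x ^ 2)) (Iio 0) := by
    rw [← (Measure.measurePreserving_neg (volume : Measure ℝ)).integrableOn_comp_preimage
        (Homeomorph.neg ℝ).measurableEmbedding]
    simp only [Function.comp_def, neg_sq, neg_preimage, neg_Iio, neg_neg, neg_zero, abs_neg]
    exact h0
  rw [← integrableOn_univ, ← Iio_union_Ici (a := (0:ℝ)), integrableOn_union,
    integrableOn_Ici_iff_integrableOn_Ioi]
  exact ⟨h1, h0⟩

lemma lintegral_pi_rpow_exp_lt_top (n : ℕ) (p lam : ℝ) (hp : -(n:ℝ) < p) (hp0 : p ≤ 0)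
    (hl : 0 < lam) :
    ∫⁻ x : Fin n → ℝ,
      ENNReal.ofReal ((√(∑ i, (x i)^2)) ^ p * Real.exp (-lam * ∑ i, (x i)^2)) < ⊤ := by
  have hn : 0 < n := by
    by_contra h
    push_neg at h
    interval_cases n
    simp at hp; linarith
  have hpn : -1 < p / n := by
    rw [neg_lt, ← neg_div, div_lt_one (by exact_mod_cast hn)]
    linarith
  have hq : Integrable fun r : ℝ => |r| ^ (p / n) * Real.exp (-lam * r ^ 2) :=
    integrable_abs_rpow_mul_exp_neg_mul_sq hl hpn
  set Q : (Fin n → ℝ) → ℝ := fun x => ∏ i, (|x i| ^ (p / n) * Real.exp (-lam * (x i) ^ 2)) with hQ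
  have hQint : Integrable Q := by
    apply Integrable.fintype_prod
      (f := fun (_ : Fin n) (r : ℝ) => |r| ^ (p/n) * Real.exp (-lam * r^2))
    intro i; exact hq
  have hae : ∀ᵐ x : Fin n → ℝ, ∀ i, x i ≠ 0 := by
    rw [MeasureTheory.ae_all_iff]
    intro i
    exact MeasureTheory.Measure.ae_eval_ne (fun _ => (volume : Measure ℝ)) i 0
  have hbound : ∀ᵐ x : Fin n → ℝ,
      ENNReal.ofReal ((√(∑ i, (x i)^2)) ^ p * Real.exp (-lam * ∑ i, (x i)^2)) ≤
        ENNReal.ofReal (Q x) := by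
    filter_upwards [hae] with x hx
    apply ENNReal.ofReal_le_ofReal
    set S := ∑ j, (x j)^2 with hS
    have hS0 : ∀ i, (x i)^2 ≤ S :=
      fun i => Finset.single_le_sum (fun j _ => sq_nonneg (x j)) (Finset.mem_univ i)
    have habs : ∀ i, |x i| ≤ √S := by
      intro i
      rw [← Real.sqrt_sq_eq_abs]
      exact Real.sqrt_le_sqrt (hS0 i)
    have hSpos : 0 < S := by
      have h0 := hx ⟨0, hn⟩
      calc (0:ℝ) < (x ⟨0, hn⟩)^2 := by positivity
        _ ≤ S := hS0 _
    have hexp : Real.exp (-lam * S) = ∏ i, Real.exp (-lam * (x i)^2) := by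
      rw [← Real.exp_sum]
      congr 1
      rw [hS, Finset.mul_sum]
    have hpow : (√S) ^ p = ∏ _i : Fin n, (√S) ^ (p/n) := by
      rw [Finset.prod_const, Finset.card_univ, Fintype.card_fin,
        ← Real.rpow_natCast ((√S) ^ (p/n)) n, ← Real.rpow_mul (Real.sqrt_nonneg _),
        div_mul_cancel₀]
      exact_mod_cast hn.ne'
    have hfac : ∀ i : Fin n, (√S) ^ (p/n) ≤ |x i| ^ (p/n) := by
      intro i
      exact Real.rpow_le_rpow_of_nonpos (abs_pos.2 (hx i)) (habs i)
        (div_nonpos_of_nonpos_of_nonneg hp0 (Nat.cast_nonneg n))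
    calc (√S) ^ p * Real.exp (-lam * S)
        = (∏ _i : Fin n, (√S) ^ (p/n)) * ∏ i, Real.exp (-lam * (x i)^2) := by
          rw [← hpow, ← hexp]
      _ ≤ (∏ i, |x i| ^ (p/n)) * ∏ i, Real.exp (-lam * (x i)^2) := by
          apply mul_le_mul_of_nonneg_right
          · exact Finset.prod_le_prod (fun i _ => Real.rpow_nonneg (Real.sqrt_nonneg _) _)
              (fun i _ => hfac i)
          · exact Finset.prod_nonneg fun i _ => (Real.exp_pos _).le
      _ = Q x := (Finset.prod_mul_distrib).symm
  calc ∫⁻ x : Fin n → ℝ,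
      ENNReal.ofReal ((√(∑ i, (x i)^2)) ^ p * Real.exp (-lam * ∑ i, (x i)^2))
      ≤ ∫⁻ x, ENNReal.ofReal (Q x) := lintegral_mono_ae hbound
    _ ≤ ∫⁻ x, ‖Q x‖₊ := by
        apply lintegral_mono
        intro x
        show ENNReal.ofReal (Q x) ≤ (‖Q x‖₊ : ℝ≥0∞)
        rw [← enorm_eq_nnnorm, ← ofReal_norm, Real.norm_eq_abs]
        exact ENNReal.ofReal_le_ofReal (le_abs_self _)
    _ < ⊤ := hQint.2

lemma caflisch_pointwise (ε a₁ a₂ δ : ℝ) (ha₁ : 0 < a₁) (ha₂ : 0 < a₂) (hδ0 : 0 < δ)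
    (hδε : δ ≤ ε) (η ζ : EuclideanSpace ℝ (Fin 3)) (hζ : η - ζ ≠ 0) :
    ‖η - ζ‖ ^ (ε - 3) * Real.exp (-a₁ * ‖η - ζ‖ ^ 2 - a₂ * (‖η‖ ^ 2 - ‖ζ‖ ^ 2) ^ 2 / ‖η - ζ‖ ^ 2)
      ≤ Real.exp ((ε - δ)^2 / a₁) * (‖η - ζ‖ ^ (δ - 3) *
        Real.exp (-(a₁/2) * ‖η - ζ‖ ^ 2
          - (4*a₁*a₂/(a₁+4*a₂)) * ⟪η, η - ζ⟫^2 / ‖η - ζ‖ ^ 2)) := by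
  set v := η - ζ with hv
  set r := ‖v‖ with hrdef
  have hr : 0 < r := norm_pos_iff.2 hζ
  set u := ⟪η, v⟫ with hu
  have hsq : ‖η‖^2 - ‖ζ‖^2 = 2*u - r^2 := by
    have h1 : ζ = η - v := by rw [hv, sub_sub_cancel]
    rw [h1, norm_sub_sq_real]
    ring
  have hr2 : (0:ℝ) < r^2 := by positivity
  have hD : (0:ℝ) < a₁ + 4*a₂ := by linarith
  set B := 4*a₁*a₂/(a₁+4*a₂) with hB
  -- the rpow comparison
  have hA : r ^ (ε-3) ≤ Real.exp ((ε-δ)^2/a₁) * (r^(δ-3) * Real.exp ((a₁/4) * r^2)) := by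
    have h2 : r ^ (ε-3) = r^(δ-3) * r^(ε-δ) := by
      rw [← Real.rpow_add hr]
      ring_nf
    have h3 : r^(ε-δ) ≤ Real.exp ((ε-δ)^2/(4*(a₁/4))) * Real.exp ((a₁/4) * r^2) :=
      rpow_le_exp_mul (by linarith) (by linarith) hr.le
    rw [show 4*(a₁/4) = a₁ by ring] at h3
    calc r ^ (ε-3) = r^(δ-3) * r^(ε-δ) := h2
      _ ≤ r^(δ-3) * (Real.exp ((ε-δ)^2/a₁) * Real.exp ((a₁/4) * r^2)) :=
          mul_le_mul_of_nonneg_left h3 (Real.rpow_nonneg hr.le _)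
      _ = Real.exp ((ε-δ)^2/a₁) * (r^(δ-3) * Real.exp ((a₁/4) * r^2)) := by ring
  -- the exponent comparison
  have hkey : B * u^2 ≤ a₂*(2*u-r^2)^2 + (a₁/4)*(r^2)^2 := by
    rw [hB, div_mul_eq_mul_div, div_le_iff₀ hD]
    nlinarith [sq_nonneg (8*a₂*u - (a₁+4*a₂)*r^2)]
  have hexp : -a₁ * r^2 - a₂*(2*u - r^2)^2/r^2 ≤
      -(a₁/2) * r^2 - B * u^2 / r^2 - (a₁/4) * r^2 := by
    have e1 : B * u^2 / r^2 ≤ (a₂*(2*u-r^2)^2 + (a₁/4)*(r^2)^2)/r^2 := by gcongr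
    have e2 : (a₂*(2*u-r^2)^2 + (a₁/4)*(r^2)^2)/r^2
        = a₂*(2*u-r^2)^2/r^2 + (a₁/4)*r^2 := by
      field_simp
    rw [e2] at e1
    linarith
  -- assemble
  rw [hsq]
  calc r ^ (ε-3) * Real.exp (-a₁ * r^2 - a₂*(2*u - r^2)^2/r^2)
      ≤ (Real.exp ((ε-δ)^2/a₁) * (r^(δ-3) * Real.exp ((a₁/4) * r^2))) *
          Real.exp (-a₁ * r^2 - a₂*(2*u - r^2)^2/r^2) :=
        mul_le_mul_of_nonneg_right hA (Real.exp_pos _).le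
    _ = Real.exp ((ε-δ)^2/a₁) * (r^(δ-3) *
          Real.exp ((a₁/4) * r^2 + (-a₁ * r^2 - a₂*(2*u - r^2)^2/r^2))) := by
        rw [Real.exp_add]
        ring
    _ ≤ Real.exp ((ε-δ)^2/a₁) * (r^(δ-3) *
          Real.exp (-(a₁/2) * r^2 - B * u^2 / r^2)) := by
        apply mul_le_mul_of_nonneg_left _ (Real.exp_pos _).le
        apply mul_le_mul_of_nonneg_left _ (Real.rpow_nonneg hr.le _)
        exact Real.exp_le_exp.2 (by linarith)

lemma caflisch_split (δ a₁ B c t s : ℝ) (hδ3 : δ - 3 < 0) (ha₁ : 0 < a₁) (hB : 0 < B)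
    (hs : 0 ≤ s) :
    (√(t^2+s)) ^ (δ-3) * Real.exp (-(a₁/2) * (t^2+s) - B * (c*t)^2 / (t^2+s))
      ≤ (√s) ^ (δ-3) * Real.exp (-(a₁/2) * s) * Real.exp (-(B*c^2/2) * (t^2/s))
        + Real.exp (-(B*c^2/2)) * ((√(t^2+s)) ^ (δ-3) * Real.exp (-(a₁/2) * (t^2+s))) := by
  rcases le_or_gt s (t^2) with h | h
  · -- t² dominates: use the GB term
    apply le_add_of_nonneg_of_le (by positivity)
    rcases eq_or_lt_of_le (show (0:ℝ) ≤ t^2+s by positivity) with h0 | h0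
    · rw [← h0, Real.sqrt_zero, Real.zero_rpow (by linarith)]
      simp only [zero_mul, mul_zero]
      positivity
    · have hq : B*c^2/2 ≤ B*(c*t)^2/(t^2+s) := by
        rw [mul_pow, div_le_div_iff₀ (by norm_num) h0]
        nlinarith [mul_nonneg (mul_nonneg hB.le (sq_nonneg c)) (sub_nonneg.2 h)]
      calc (√(t^2+s)) ^ (δ-3) * Real.exp (-(a₁/2) * (t^2+s) - B * (c*t)^2 / (t^2+s))
          ≤ (√(t^2+s)) ^ (δ-3) * Real.exp (-(B*c^2/2) + -(a₁/2) * (t^2+s)) := by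
            apply mul_le_mul_of_nonneg_left _ (Real.rpow_nonneg (Real.sqrt_nonneg _) _)
            exact Real.exp_le_exp.2 (by linarith)
        _ = Real.exp (-(B*c^2/2)) * ((√(t^2+s)) ^ (δ-3) * Real.exp (-(a₁/2) * (t^2+s))) := by
            rw [Real.exp_add]
            ring
  · -- s dominates: use the GA term
    apply le_add_of_le_of_nonneg _ (by positivity)
    have hs0 : 0 < s := lt_of_le_of_lt (sq_nonneg t) h
    have h1 : (√(t^2+s))^(δ-3) ≤ (√s)^(δ-3) :=
      Real.rpow_le_rpow_of_nonpos (Real.sqrt_pos.2 hs0)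
        (Real.sqrt_le_sqrt (by nlinarith [sq_nonneg t])) hδ3.le
    have h2 : -(a₁/2) * (t^2+s) - B * (c*t)^2 / (t^2+s)
        ≤ -(a₁/2) * s + -(B*c^2/2) * (t^2/s) := by
      have e1 : (B*c^2/2) * (t^2/s) ≤ B*(c*t)^2/(t^2+s) := by
        have e0 : (B*c^2/2) * (t^2/s) = (B*(c*t)^2)/(2*s) := by
          rw [mul_pow]
          field_simp
        rw [e0]
        gcongr
        linarith
      have e2 : -(a₁/2) * (t^2+s) ≤ -(a₁/2) * s := by nlinarith [sq_nonneg t]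
      linarith
    calc (√(t^2+s)) ^ (δ-3) * Real.exp (-(a₁/2) * (t^2+s) - B * (c*t)^2 / (t^2+s))
        ≤ (√s)^(δ-3) * Real.exp (-(a₁/2) * s + -(B*c^2/2) * (t^2/s)) := by
          apply mul_le_mul h1 (Real.exp_le_exp.2 h2) (Real.exp_pos _).le
            (Real.rpow_nonneg (Real.sqrt_nonneg _) _)
      _ = (√s) ^ (δ-3) * Real.exp (-(a₁/2) * s) * Real.exp (-(B*c^2/2) * (t^2/s)) := by
          rw [Real.exp_add]
          ring

lemma caflisch_gauss (A q : ℝ) (hA : 0 ≤ A) (hq : 0 < q) :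
    ∫⁻ t : ℝ, ENNReal.ofReal (A * Real.exp (-q * t^2)) = ENNReal.ofReal (A * √(π/q)) := by
  simp_rw [ENNReal.ofReal_mul hA]
  rw [lintegral_const_mul' _ _ ENNReal.ofReal_ne_top,
    ← ofReal_integral_eq_lintegral_ofReal (integrable_exp_neg_mul_sq hq)
      (Filter.Eventually.of_forall fun t => (Real.exp_pos _).le),
    integral_gaussian]

/-- Caflisch-type decay estimate: for `ε, a₁, a₂ > 0` there is `C`
(depending on `ε, a₁, a₂`) such that for all `η ∈ ℝ³`,
`∫_{ℝ³} |η-ζ|^{ε-3} exp(-a₁|η-ζ|² - a₂(|η|²-|ζ|²)²/|η-ζ|²) dζ ≤ C(1+|η|)⁻¹`. -/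
theorem caflisch_kernel_decay
    (ε a₁ a₂ : ℝ) (hε : 0 < ε) (ha₁ : 0 < a₁) (ha₂ : 0 < a₂) :
    ∃ C : ℝ, ∀ η : EuclideanSpace ℝ (Fin 3),
      (∫ ζ : EuclideanSpace ℝ (Fin 3),
        ‖η - ζ‖ ^ (ε - 3) *
          Real.exp (-a₁ * ‖η - ζ‖ ^ 2 - a₂ * (‖η‖ ^ 2 - ‖ζ‖ ^ 2) ^ 2 / ‖η - ζ‖ ^ 2)) ≤
      C * (1 + ‖η‖)⁻¹ := by
  classical
  set δ := min ε 1 with hδdef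
  have hδ0 : 0 < δ := lt_min hε one_pos
  have hδ1 : δ ≤ 1 := min_le_right _ _
  have hδε : δ ≤ ε := min_le_left _ _
  have hδ3 : δ - 3 < 0 := by linarith
  set B := 4*a₁*a₂/(a₁+4*a₂) with hBdef
  have hB : 0 < B := by positivity
  set C₀ := Real.exp ((ε - δ)^2/a₁) with hC₀def
  have hC₀ : 0 < C₀ := Real.exp_pos _
  set N3 := ∫⁻ x : Fin 3 → ℝ,
      ENNReal.ofReal ((√(∑ i, (x i)^2))^(δ-3) * Real.exp (-(a₁/2) * ∑ i, (x i)^2)) with hN3def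
  set N2 := ∫⁻ y : Fin 2 → ℝ,
      ENNReal.ofReal ((√(∑ i, (y i)^2))^(δ-2) * Real.exp (-(a₁/2) * ∑ i, (y i)^2)) with hN2def
  have hN3 : N3 < ⊤ :=
    lintegral_pi_rpow_exp_lt_top 3 (δ-3) (a₁/2) (by norm_num; linarith) (by linarith)
      (by linarith)
  have hN2 : N2 < ⊤ :=
    lintegral_pi_rpow_exp_lt_top 2 (δ-2) (a₁/2) (by norm_num; linarith) (by linarith)
      (by linarith)
  set K := C₀ * (√(2*π/B) * N2.toReal + (2/B) * N3.toReal) with hKdef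
  have hK : 0 ≤ K := by positivity
  refine ⟨2 * (C₀ * N3.toReal) + 2*K, fun η => ?_⟩
  set c := ‖η‖ with hcdef
  have hc0 : 0 ≤ c := norm_nonneg η
  have hCnn : (0:ℝ) ≤ 2 * (C₀ * N3.toReal) + 2*K := by positivity
  -- measurability facts
  have hinner : Measurable fun v : EuclideanSpace ℝ (Fin 3) => ⟪η, v⟫ :=
    (continuous_const.inner continuous_id).measurable
  have hgm : Measurable (fun ζ : EuclideanSpace ℝ (Fin 3) =>
      ‖η - ζ‖ ^ (ε - 3) *
        Real.exp (-a₁ * ‖η - ζ‖ ^ 2 - a₂ * (‖η‖ ^ 2 - ‖ζ‖ ^ 2) ^ 2 / ‖η - ζ‖ ^ 2)) := by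
    fun_prop
  have hfm : Measurable (fun v : EuclideanSpace ℝ (Fin 3) =>
      ENNReal.ofReal (‖v‖ ^ (δ - 3) *
        Real.exp (-(a₁/2) * ‖v‖ ^ 2 - B * ⟪η, v⟫^2 / ‖v‖ ^ 2))) := by
    have := hinner
    fun_prop
  -- pass to the lower integral
  rw [integral_eq_lintegral_of_nonneg_ae
    (Filter.Eventually.of_forall fun ζ => by positivity) hgm.aestronglyMeasurable]
  -- the key bound on the lower integral
  have target : (∫⁻ ζ : EuclideanSpace ℝ (Fin 3), ENNReal.ofReal
      (‖η - ζ‖ ^ (ε - 3) *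
        Real.exp (-a₁ * ‖η - ζ‖ ^ 2 - a₂ * (‖η‖ ^ 2 - ‖ζ‖ ^ 2) ^ 2 / ‖η - ζ‖ ^ 2))) ≤
      ENNReal.ofReal ((2 * (C₀ * N3.toReal) + 2*K) * (1 + c)⁻¹) := by
    -- Step 1: pointwise bound and translation invariance
    have hne : ∀ᵐ ζ : EuclideanSpace ℝ (Fin 3), ζ ≠ η := by
      rw [MeasureTheory.ae_iff]
      simp only [ne_eq, not_not, Set.setOf_eq_eq_singleton]
      exact measure_singleton η
    have hstep1 : (∫⁻ ζ : EuclideanSpace ℝ (Fin 3), ENNReal.ofReal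
        (‖η - ζ‖ ^ (ε - 3) *
          Real.exp (-a₁ * ‖η - ζ‖ ^ 2 - a₂ * (‖η‖ ^ 2 - ‖ζ‖ ^ 2) ^ 2 / ‖η - ζ‖ ^ 2))) ≤
        ENNReal.ofReal C₀ * ∫⁻ v : EuclideanSpace ℝ (Fin 3), ENNReal.ofReal
          (‖v‖ ^ (δ - 3) * Real.exp (-(a₁/2) * ‖v‖ ^ 2 - B * ⟪η, v⟫^2 / ‖v‖ ^ 2)) := by
      calc _ ≤ ∫⁻ ζ : EuclideanSpace ℝ (Fin 3), ENNReal.ofReal (C₀ *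
          (‖η - ζ‖ ^ (δ - 3) *
            Real.exp (-(a₁/2) * ‖η - ζ‖ ^ 2 - B * ⟪η, η - ζ⟫^2 / ‖η - ζ‖ ^ 2))) := by
            apply lintegral_mono_ae
            filter_upwards [hne] with ζ hζ
            apply ENNReal.ofReal_le_ofReal
            exact caflisch_pointwise ε a₁ a₂ δ ha₁ ha₂ hδ0 hδε η ζ
              (sub_ne_zero_of_ne (Ne.symm hζ))
        _ = ENNReal.ofReal C₀ * ∫⁻ ζ : EuclideanSpace ℝ (Fin 3), ENNReal.ofReal
            (‖η - ζ‖ ^ (δ - 3) *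
              Real.exp (-(a₁/2) * ‖η - ζ‖ ^ 2 - B * ⟪η, η - ζ⟫^2 / ‖η - ζ‖ ^ 2)) := by
            simp_rw [ENNReal.ofReal_mul hC₀.le]
            exact lintegral_const_mul' _ _ ENNReal.ofReal_ne_top
        _ = _ := by
            congr 1
            exact (Measure.measurePreserving_sub_left volume η).lintegral_comp hfm
    -- notation shortcuts for this proof
    have hvnorm : ∀ v : EuclideanSpace ℝ (Fin 3), ‖v‖ = √(∑ i, (v i)^2) := by
      intro v
      rw [EuclideanSpace.norm_eq]
      congr 1
      exact Finset.sum_congr rfl fun i _ => by rw [Real.norm_eq_abs, sq_abs]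
    have hvnorm2 : ∀ v : EuclideanSpace ℝ (Fin 3), ‖v‖^2 = ∑ i, (v i)^2 := by
      intro v
      rw [hvnorm v, Real.sq_sqrt (Finset.sum_nonneg fun i _ => sq_nonneg _)]
    have hN3R : N3 = ENNReal.ofReal (N3.toReal) := (ENNReal.ofReal_toReal hN3.ne).symm
    have hN2R : N2 = ENNReal.ofReal (N2.toReal) := (ENNReal.ofReal_toReal hN2.ne).symm
    have hmeas3 : Measurable (fun x : Fin 3 → ℝ =>
        ENNReal.ofReal ((√(∑ i, (x i)^2))^(δ-3) * Real.exp (-(a₁/2) * ∑ i, (x i)^2))) := by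
      fun_prop
    refine hstep1.trans ?_
    rcases le_or_gt c 1 with hc1 | hc1
    · -- small ‖η‖ : trivial bound
      have hLf : (∫⁻ v : EuclideanSpace ℝ (Fin 3), ENNReal.ofReal
          (‖v‖ ^ (δ - 3) * Real.exp (-(a₁/2) * ‖v‖ ^ 2 - B * ⟪η, v⟫^2 / ‖v‖ ^ 2))) ≤ N3 := by
        calc _ ≤ (∫⁻ v : EuclideanSpace ℝ (Fin 3), ENNReal.ofReal
            (‖v‖ ^ (δ - 3) * Real.exp (-(a₁/2) * ‖v‖ ^ 2))) := by
              apply lintegral_mono fun v => ?_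
              apply ENNReal.ofReal_le_ofReal
              apply mul_le_mul_of_nonneg_left _ (Real.rpow_nonneg (norm_nonneg _) _)
              apply Real.exp_le_exp.2
              have : (0:ℝ) ≤ B * ⟪η, v⟫^2 / ‖v‖ ^ 2 := by positivity
              linarith
          _ = N3 := by
              rw [hN3def, ← (EuclideanSpace.volume_preserving_symm_measurableEquiv_toLp
                (Fin 3)).lintegral_comp hmeas3]
              apply lintegral_congr fun v => ?_
              have hcoord : ∀ i, (MeasurableEquiv.toLp 2 (Fin 3 → ℝ)).symm v i = v i := by
                intro i
                rfl
              simp only [hcoord]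
              rw [← hvnorm, ← hvnorm2]
      calc ENNReal.ofReal C₀ * (∫⁻ v : EuclideanSpace ℝ (Fin 3), ENNReal.ofReal
          (‖v‖ ^ (δ - 3) * Real.exp (-(a₁/2) * ‖v‖ ^ 2 - B * ⟪η, v⟫^2 / ‖v‖ ^ 2)))
          ≤ ENNReal.ofReal C₀ * N3 := mul_le_mul_right hLf _
        _ = ENNReal.ofReal (C₀ * N3.toReal) := by
            conv_lhs => rw [hN3R]
            rw [← ENNReal.ofReal_mul hC₀.le]
        _ ≤ ENNReal.ofReal ((2 * (C₀ * N3.toReal) + 2*K) * (1 + c)⁻¹) := by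
            apply ENNReal.ofReal_le_ofReal
            rw [← div_eq_mul_inv, le_div_iff₀ (by linarith : (0:ℝ) < 1 + c)]
            have hN3' : (0:ℝ) ≤ N3.toReal := ENNReal.toReal_nonneg
            nlinarith [mul_nonneg hC₀.le hN3']
    · -- large ‖η‖ : rotation, Fubini and the Gaussian gain
      have hc0' : (0:ℝ) < c := by linarith
      have hη : η ≠ 0 := by
        intro h
        rw [hcdef, h, norm_zero] at hc1
        exact absurd hc1 (by norm_num)
      -- rotate η to c • e₀
      set e₀ : EuclideanSpace ℝ (Fin 3) := EuclideanSpace.single (0 : Fin 3) (1:ℝ) with he₀def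
      have he₀ : ‖(c • e₀ : EuclideanSpace ℝ (Fin 3))‖ = c := by
        rw [norm_smul, he₀def, EuclideanSpace.norm_single]
        simp [abs_of_nonneg hc0]
      set T : EuclideanSpace ℝ (Fin 3) ≃ₗᵢ[ℝ] EuclideanSpace ℝ (Fin 3) :=
        Submodule.reflection (ℝ ∙ (η - c • e₀))ᗮ with hTdef
      have hT : T η = c • e₀ := Submodule.reflection_sub (by rw [he₀])
      have hrot : ∀ v : EuclideanSpace ℝ (Fin 3),
          ‖T.symm v‖ ^ (δ - 3) *
            Real.exp (-(a₁/2) * ‖T.symm v‖ ^ 2 - B * ⟪η, T.symm v⟫^2 / ‖T.symm v‖ ^ 2)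
          = ‖v‖ ^ (δ - 3) *
            Real.exp (-(a₁/2) * ‖v‖ ^ 2 - B * (c * v 0)^2 / ‖v‖ ^ 2) := by
        intro v
        have h1 : ‖T.symm v‖ = ‖v‖ := T.symm.norm_map v
        have h2 : ⟪η, T.symm v⟫ = c * v 0 := by
          calc ⟪η, T.symm v⟫ = ⟪T η, T (T.symm v)⟫ := (T.inner_map_map η (T.symm v)).symm
            _ = ⟪(c • e₀ : EuclideanSpace ℝ (Fin 3)), v⟫ := by rw [hT, T.apply_symm_apply]
            _ = c * v 0 := by
                rw [real_inner_smul_left, he₀def, EuclideanSpace.inner_single_left]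
                simp
        rw [h1, h2]
      have hf2m : Measurable (fun v : EuclideanSpace ℝ (Fin 3) =>
          ENNReal.ofReal (‖v‖ ^ (δ - 3) *
            Real.exp (-(a₁/2) * ‖v‖ ^ 2 - B * (c * v 0)^2 / ‖v‖ ^ 2))) := by
        have hev : Measurable (fun v : EuclideanSpace ℝ (Fin 3) => v 0) :=
          ((continuous_apply (0 : Fin 3)).comp
            (PiLp.continuous_ofLp (p := 2) (β := fun _ : Fin 3 => ℝ))).measurable
        have := hev
        fun_prop
      have hstep2 : (∫⁻ v : EuclideanSpace ℝ (Fin 3), ENNReal.ofReal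
          (‖v‖ ^ (δ - 3) * Real.exp (-(a₁/2) * ‖v‖ ^ 2 - B * ⟪η, v⟫^2 / ‖v‖ ^ 2)))
          = ∫⁻ v : EuclideanSpace ℝ (Fin 3), ENNReal.ofReal
            (‖v‖ ^ (δ - 3) * Real.exp (-(a₁/2) * ‖v‖ ^ 2 - B * (c * v 0)^2 / ‖v‖ ^ 2)) := by
        rw [← (T.symm.measurePreserving).lintegral_comp hfm]
        apply lintegral_congr fun v => ?_
        rw [← hrot v]
      rw [hstep2]
      -- carry to the product space ℝ × (Fin 2 → ℝ)
      have hsum3 : ∀ x : Fin 3 → ℝ,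
          ∑ i, (x i)^2 = (x 0)^2 + ∑ j : Fin 2, (x ((0:Fin 3).succAbove j))^2 :=
        fun x => Fin.sum_univ_succAbove (fun i => (x i)^2) 0
      have hGm : Measurable (fun p : ℝ × (Fin 2 → ℝ) =>
          ENNReal.ofReal ((√((p.1)^2 + ∑ j, (p.2 j)^2))^(δ-3) *
            Real.exp (-(a₁/2)*((p.1)^2 + ∑ j, (p.2 j)^2)
              - B*(c*p.1)^2/((p.1)^2 + ∑ j, (p.2 j)^2)))) := by
        fun_prop
      have hstep3 : (∫⁻ v : EuclideanSpace ℝ (Fin 3), ENNReal.ofReal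
          (‖v‖ ^ (δ - 3) * Real.exp (-(a₁/2) * ‖v‖ ^ 2 - B * (c * v 0)^2 / ‖v‖ ^ 2)))
          = ∫⁻ p : ℝ × (Fin 2 → ℝ),
            ENNReal.ofReal ((√((p.1)^2 + ∑ j, (p.2 j)^2))^(δ-3) *
              Real.exp (-(a₁/2)*((p.1)^2 + ∑ j, (p.2 j)^2)
                - B*(c*p.1)^2/((p.1)^2 + ∑ j, (p.2 j)^2))) := by
        rw [← ((MeasureTheory.volume_preserving_piFinSuccAbove
            (fun _ : Fin 3 => ℝ) 0).comp
            (EuclideanSpace.volume_preserving_symm_measurableEquiv_toLp (Fin 3))).lintegral_comp hGm]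
        apply lintegral_congr fun v => ?_
        simp only [Function.comp_apply, MeasurableEquiv.piFinSuccAbove_apply]
        rw [hvnorm v]
        simp only [Real.sq_sqrt (Finset.sum_nonneg fun i (_ : i ∈ Finset.univ) =>
          sq_nonneg (v i))]
        rw [hsum3 v]
        rfl
      rw [hstep3]
      -- split the integrand
      have hGAm : Measurable (fun p : ℝ × (Fin 2 → ℝ) =>
          ENNReal.ofReal ((√(∑ j, (p.2 j)^2))^(δ-3) *
            Real.exp (-(a₁/2)* ∑ j, (p.2 j)^2) *
            Real.exp (-(B*c^2/2) * ((p.1)^2 / ∑ j, (p.2 j)^2)))) := by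
        fun_prop
      have hGBm : Measurable (fun p : ℝ × (Fin 2 → ℝ) =>
          ENNReal.ofReal (Real.exp (-(B*c^2/2)) *
            ((√((p.1)^2 + ∑ j, (p.2 j)^2))^(δ-3) *
              Real.exp (-(a₁/2)*((p.1)^2 + ∑ j, (p.2 j)^2))))) := by
        fun_prop
      have hsplit : (∫⁻ p : ℝ × (Fin 2 → ℝ),
          ENNReal.ofReal ((√((p.1)^2 + ∑ j, (p.2 j)^2))^(δ-3) *
            Real.exp (-(a₁/2)*((p.1)^2 + ∑ j, (p.2 j)^2)
              - B*(c*p.1)^2/((p.1)^2 + ∑ j, (p.2 j)^2))))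
          ≤ (∫⁻ p : ℝ × (Fin 2 → ℝ),
              ENNReal.ofReal ((√(∑ j, (p.2 j)^2))^(δ-3) *
                Real.exp (-(a₁/2)* ∑ j, (p.2 j)^2) *
                Real.exp (-(B*c^2/2) * ((p.1)^2 / ∑ j, (p.2 j)^2))))
            + ∫⁻ p : ℝ × (Fin 2 → ℝ),
              ENNReal.ofReal (Real.exp (-(B*c^2/2)) *
                ((√((p.1)^2 + ∑ j, (p.2 j)^2))^(δ-3) *
                  Real.exp (-(a₁/2)*((p.1)^2 + ∑ j, (p.2 j)^2)))) := by
        rw [← lintegral_add_left hGAm]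
        apply lintegral_mono fun p => ?_
        calc ENNReal.ofReal ((√((p.1)^2 + ∑ j, (p.2 j)^2))^(δ-3) *
            Real.exp (-(a₁/2)*((p.1)^2 + ∑ j, (p.2 j)^2)
              - B*(c*p.1)^2/((p.1)^2 + ∑ j, (p.2 j)^2)))
            ≤ ENNReal.ofReal ((√(∑ j, (p.2 j)^2))^(δ-3) *
                Real.exp (-(a₁/2)* ∑ j, (p.2 j)^2) *
                Real.exp (-(B*c^2/2) * ((p.1)^2 / ∑ j, (p.2 j)^2))
              + Real.exp (-(B*c^2/2)) *
                ((√((p.1)^2 + ∑ j, (p.2 j)^2))^(δ-3) *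
                  Real.exp (-(a₁/2)*((p.1)^2 + ∑ j, (p.2 j)^2)))) := by
              apply ENNReal.ofReal_le_ofReal
              exact caflisch_split δ a₁ B c p.1 (∑ j, (p.2 j)^2) hδ3 ha₁ hB
                (Finset.sum_nonneg fun j _ => sq_nonneg _)
          _ ≤ _ := ENNReal.ofReal_add_le
      -- the GB integral
      have hmeasR : Measurable (fun p : ℝ × (Fin 2 → ℝ) =>
          ENNReal.ofReal ((√((p.1)^2 + ∑ j, (p.2 j)^2))^(δ-3) *
            Real.exp (-(a₁/2)*((p.1)^2 + ∑ j, (p.2 j)^2)))) := by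
        fun_prop
      have hGB : (∫⁻ p : ℝ × (Fin 2 → ℝ),
          ENNReal.ofReal (Real.exp (-(B*c^2/2)) *
            ((√((p.1)^2 + ∑ j, (p.2 j)^2))^(δ-3) *
              Real.exp (-(a₁/2)*((p.1)^2 + ∑ j, (p.2 j)^2)))))
          = ENNReal.ofReal (Real.exp (-(B*c^2/2))) * N3 := by
        simp_rw [ENNReal.ofReal_mul (Real.exp_pos _).le]
        rw [lintegral_const_mul' _ _ ENNReal.ofReal_ne_top]
        congr 1
        rw [hN3def, ← (MeasureTheory.volume_preserving_piFinSuccAbove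
          (fun _ : Fin 3 => ℝ) 0).lintegral_comp hmeasR]
        apply lintegral_congr fun x => ?_
        simp only [MeasurableEquiv.piFinSuccAbove_apply]
        rw [hsum3 x]
        rfl
      -- the GA integral
      have hSae : ∀ᵐ y : Fin 2 → ℝ, 0 < ∑ j, (y j)^2 := by
        filter_upwards [MeasureTheory.Measure.ae_eval_ne
          (fun _ : Fin 2 => (volume : Measure ℝ)) 0 (0:ℝ)] with y hy
        calc (0:ℝ) < (y 0)^2 := by positivity
          _ ≤ ∑ j, (y j)^2 :=
            Finset.single_le_sum (fun j _ => sq_nonneg (y j)) (Finset.mem_univ 0)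
      have hGA : (∫⁻ p : ℝ × (Fin 2 → ℝ),
          ENNReal.ofReal ((√(∑ j, (p.2 j)^2))^(δ-3) *
            Real.exp (-(a₁/2)* ∑ j, (p.2 j)^2) *
            Real.exp (-(B*c^2/2) * ((p.1)^2 / ∑ j, (p.2 j)^2))))
          = ENNReal.ofReal (√(2*π/B) / c) * N2 := by
        rw [MeasureTheory.Measure.volume_eq_prod, lintegral_prod_symm _ hGAm.aemeasurable]
        have hinner2 : ∀ᵐ y : Fin 2 → ℝ, (∫⁻ t : ℝ,
            ENNReal.ofReal ((√(∑ j, (y j)^2))^(δ-3) *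
              Real.exp (-(a₁/2)* ∑ j, (y j)^2) *
              Real.exp (-(B*c^2/2) * (t^2 / ∑ j, (y j)^2))))
            = ENNReal.ofReal (√(2*π/B) / c) *
              ENNReal.ofReal ((√(∑ j, (y j)^2))^(δ-2) *
                Real.exp (-(a₁/2)* ∑ j, (y j)^2)) := by
          filter_upwards [hSae] with y hS
          set s := ∑ j, (y j)^2 with hsdef
          set A := (√s)^(δ-3) * Real.exp (-(a₁/2) * s) with hAdef
          have hA : 0 ≤ A := by positivity
          set q := B*c^2/(2*s) with hqdef
          have hq : 0 < q := by positivity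
          have hform : ∀ t : ℝ, A * Real.exp (-(B*c^2/2) * (t^2 / s))
              = A * Real.exp (-q * t^2) := by
            intro t
            congr 2
            rw [hqdef]
            ring
          simp_rw [hform]
          rw [caflisch_gauss A q hA hq]
          rw [← ENNReal.ofReal_mul (by positivity)]
          congr 1
          have hπq : π/q = (√(2*π/B) * √s / c)^2 := by
            rw [div_pow, mul_pow, Real.sq_sqrt (by positivity : (0:ℝ) ≤ 2*π/B),
              Real.sq_sqrt hS.le, hqdef]
            field_simp
          have hsqrt : √(π/q) = √(2*π/B) * √s / c := by
            rw [hπq, Real.sqrt_sq (by positivity)]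
          have hrpow : (√s)^(δ-3) * √s = (√s)^(δ-2) := by
            rw [show δ-2 = (δ-3)+1 by ring, Real.rpow_add (Real.sqrt_pos.2 hS),
              Real.rpow_one]
          rw [hAdef, hsqrt, ← hrpow]
          ring
        rw [lintegral_congr_ae hinner2,
          lintegral_const_mul' _ _ ENNReal.ofReal_ne_top]
      -- put the two pieces together
      have hexp2 : Real.exp (-(B*c^2/2)) ≤ 2/(B*c) := by
        have h1 : B*c/2 ≤ B*c^2/2 := by nlinarith [mul_nonneg hB.le (mul_nonneg hc0 (sub_nonneg.2 hc1.le))]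
        have h2 : Real.exp (-(B*c^2/2)) ≤ Real.exp (-(B*c/2)) :=
          Real.exp_le_exp.2 (by linarith)
        have h4 : B*c/2 ≤ Real.exp (B*c/2) := by linarith [Real.add_one_le_exp (B*c/2)]
        have h5 : (Real.exp (B*c/2))⁻¹ ≤ (B*c/2)⁻¹ :=
          inv_anti₀ (by positivity) h4
        have h6 : (B*c/2)⁻¹ = 2/(B*c) := by rw [inv_div]
        have h7 : Real.exp (-(B*c/2)) ≤ 2/(B*c) := by
          rw [Real.exp_neg]
          exact h5.trans_eq h6
        linarith [h2.trans h7]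
      have hN3' : (0:ℝ) ≤ N3.toReal := ENNReal.toReal_nonneg
      have hN2' : (0:ℝ) ≤ N2.toReal := ENNReal.toReal_nonneg
      calc ENNReal.ofReal C₀ * (∫⁻ p : ℝ × (Fin 2 → ℝ),
          ENNReal.ofReal ((√((p.1)^2 + ∑ j, (p.2 j)^2))^(δ-3) *
            Real.exp (-(a₁/2)*((p.1)^2 + ∑ j, (p.2 j)^2)
              - B*(c*p.1)^2/((p.1)^2 + ∑ j, (p.2 j)^2))))
          ≤ ENNReal.ofReal C₀ *
            (ENNReal.ofReal (√(2*π/B) / c) * N2 +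
              ENNReal.ofReal (Real.exp (-(B*c^2/2))) * N3) := by
            apply mul_le_mul_right
            refine hsplit.trans ?_
            rw [hGA, hGB]
        _ = ENNReal.ofReal (C₀ * (√(2*π/B)/c * N2.toReal +
              Real.exp (-(B*c^2/2)) * N3.toReal)) := by
            conv_lhs => rw [hN3R, hN2R]
            rw [← ENNReal.ofReal_mul (by positivity),
              ← ENNReal.ofReal_mul (Real.exp_pos _).le,
              ← ENNReal.ofReal_add (by positivity) (by positivity),
              ← ENNReal.ofReal_mul hC₀.le]
        _ ≤ ENNReal.ofReal ((2 * (C₀ * N3.toReal) + 2*K) * (1 + c)⁻¹) := by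
            apply ENNReal.ofReal_le_ofReal
            have hR1 : C₀ * (√(2*π/B)/c * N2.toReal +
                Real.exp (-(B*c^2/2)) * N3.toReal) ≤ K / c := by
              have hKc : K / c = C₀ * (√(2*π/B)/c * N2.toReal +
                  (2/(B*c)) * N3.toReal) := by
                rw [hKdef]
                field_simp
              rw [hKc]
              gcongr
            have hR2 : K / c ≤ (2 * (C₀ * N3.toReal) + 2*K) * (1 + c)⁻¹ := by
              rw [← div_eq_mul_inv, div_le_div_iff₀ hc0' (by linarith : (0:ℝ) < 1 + c)]
              nlinarith [mul_nonneg hC₀.le hN3']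
            linarith
  calc (∫⁻ ζ : EuclideanSpace ℝ (Fin 3), ENNReal.ofReal
      (‖η - ζ‖ ^ (ε - 3) *
        Real.exp (-a₁ * ‖η - ζ‖ ^ 2 - a₂ * (‖η‖ ^ 2 - ‖ζ‖ ^ 2) ^ 2 / ‖η - ζ‖ ^ 2))).toReal
      ≤ (ENNReal.ofReal ((2 * (C₀ * N3.toReal) + 2*K) * (1 + c)⁻¹)).toReal :=
        ENNReal.toReal_mono ENNReal.ofReal_ne_top target
    _ = (2 * (C₀ * N3.toReal) + 2*K) * (1 + c)⁻¹ := ENNReal.toReal_ofReal (by positivity)
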